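/- arXiv:1406.1216 — 2 statements merged into one kernel-verified Lean document; each statement's English description precedes it below -/
import Mathlib

section
/- Let A and B be two N×p real matrices, and let F_{AA^T} and F_{BB^T} denote the empirical spectral distribution functions of AA^T and BB^T (N×N symmetric matrices). Then the Lévy distance d satisfies d²(F_{AA^T}, F_{BB^T}) ≤ (√2 / N) [Tr(AA^T + BB^T) · Tr((A-B)(A-B)^T)]^{1/2}. -/
open Matrix
open scoped Classical
open Module
open scoped RealInnerProductSpace

lemma esum_apply {N : ℕ} {ι : Type*} (s : Finset ι) (f : ι → EuclideanSpace ℝ (Fin N)) (k : Fin N) :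
    (∑ i ∈ s, f i : EuclideanSpace ℝ (Fin N)) k = ∑ i ∈ s, f i k := by
  classical
  induction s using Finset.induction with
  | empty => rfl
  | insert _ _ h ih => rw [Finset.sum_insert h, Finset.sum_insert h, ← ih]; rfl

theorem qf_expand {N : ℕ} {M : Matrix (Fin N) (Fin N) ℝ} (hM : M.IsHermitian)
    (v : EuclideanSpace ℝ (Fin N)) :
    ⟪v, (WithLp.toLp 2 (M *ᵥ v) : EuclideanSpace ℝ (Fin N))⟫ =
      ∑ i, hM.eigenvalues i * ⟪hM.eigenvectorBasis i, v⟫ ^ 2 := by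
  set b := hM.eigenvectorBasis with hb
  have hv : v = ∑ i, ⟪b i, v⟫ • b i := by
    conv_lhs => rw [← b.sum_repr v]
    simp [OrthonormalBasis.repr_apply_apply, real_inner_comm]
  have hMv : (WithLp.toLp 2 (M *ᵥ v) : EuclideanSpace ℝ (Fin N)) =
      ∑ i, (hM.eigenvalues i * ⟪b i, v⟫) • (b i : EuclideanSpace ℝ (Fin N)) := by
    ext k
    conv_lhs => rw [hv]
    have h1 : (M *ᵥ (∑ i, ⟪b i, v⟫ • b i : EuclideanSpace ℝ (Fin N)) : Fin N → ℝ)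
        = ∑ i, ⟪b i, v⟫ • (M *ᵥ (b i : EuclideanSpace ℝ (Fin N)) : Fin N → ℝ) := by
      rw [WithLp.ofLp_sum, Matrix.mulVec_sum]
      simp only [WithLp.ofLp_smul, Matrix.mulVec_smul]
    rw [WithLp.ofLp_toLp, congrFun h1 k, esum_apply]
    conv_lhs => rw [Finset.sum_apply]
    have h3 : ∀ i, (M *ᵥ (b i : EuclideanSpace ℝ (Fin N)) : Fin N → ℝ)
        = hM.eigenvalues i • (b i : Fin N → ℝ) := fun i => hM.mulVec_eigenvectorBasis i
    refine Finset.sum_congr rfl fun i _ => ?_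
    have : ((hM.eigenvalues i * ⟪b i, v⟫) • (b i : EuclideanSpace ℝ (Fin N))) k
        = (hM.eigenvalues i * ⟪b i, v⟫) * (b i : Fin N → ℝ) k := rfl
    rw [this]
    have h4 : (⟪b i, v⟫ • (M *ᵥ (b i : EuclideanSpace ℝ (Fin N)) : Fin N → ℝ)) k
        = ⟪b i, v⟫ * (hM.eigenvalues i * (b i : Fin N → ℝ) k) := by rw [h3 i]; rfl
    rw [h4]; ring
  rw [hMv, inner_sum]
  congr 1; funext i
  rw [real_inner_smul_right, real_inner_comm]
  ring

lemma inner_eq_zero_of_span {N : ℕ} {M : Matrix (Fin N) (Fin N) ℝ} (hM : M.IsHermitian)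
    (s : Finset (Fin N)) {i : Fin N} (hi : i ∉ s) {v : EuclideanSpace ℝ (Fin N)}
    (hv : v ∈ Submodule.span ℝ (⇑hM.eigenvectorBasis '' ↑s)) :
    ⟪hM.eigenvectorBasis i, v⟫ = 0 := by
  induction hv using Submodule.span_induction with
  | mem x hx =>
      obtain ⟨j, hj, rfl⟩ := hx
      exact hM.eigenvectorBasis.orthonormal.2 (fun h => hi (h ▸ hj))
  | zero => exact inner_zero_right _
  | add x y _ _ hx hy => rw [inner_add_right, hx, hy, add_zero]
  | smul a x _ hx => rw [real_inner_smul_right, hx, mul_zero]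

lemma norm_sq_eq_sum_inner {N : ℕ} {M : Matrix (Fin N) (Fin N) ℝ} (hM : M.IsHermitian)
    (v : EuclideanSpace ℝ (Fin N)) :
    ‖v‖ ^ 2 = ∑ i, ⟪hM.eigenvectorBasis i, v⟫ ^ 2 := by
  set b := hM.eigenvectorBasis
  have h1 : ‖v‖ = ‖b.repr v‖ := (b.repr.norm_map v).symm
  rw [h1, EuclideanSpace.norm_eq, Real.sq_sqrt (by positivity)]
  exact Finset.sum_congr rfl fun i _ => by
    rw [b.repr_apply_apply, Real.norm_eq_abs, sq_abs]

lemma qf_le {N : ℕ} {M : Matrix (Fin N) (Fin N) ℝ} (hM : M.IsHermitian)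
    (s : Finset (Fin N)) (c : ℝ) (hs : ∀ i ∈ s, hM.eigenvalues i ≤ c)
    {v : EuclideanSpace ℝ (Fin N)}
    (hv : v ∈ Submodule.span ℝ (⇑hM.eigenvectorBasis '' ↑s)) :
    ⟪v, (WithLp.toLp 2 (M *ᵥ v) : EuclideanSpace ℝ (Fin N))⟫ ≤ c * ‖v‖ ^ 2 := by
  rw [qf_expand hM v, norm_sq_eq_sum_inner hM v, Finset.mul_sum]
  refine Finset.sum_le_sum fun i _ => ?_
  by_cases hi : i ∈ s
  · exact mul_le_mul_of_nonneg_right (hs i hi) (sq_nonneg _)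
  · rw [inner_eq_zero_of_span hM s hi hv]; simp

lemma qf_ge {N : ℕ} {M : Matrix (Fin N) (Fin N) ℝ} (hM : M.IsHermitian)
    (s : Finset (Fin N)) (c : ℝ) (hs : ∀ i ∈ s, c ≤ hM.eigenvalues i)
    {v : EuclideanSpace ℝ (Fin N)}
    (hv : v ∈ Submodule.span ℝ (⇑hM.eigenvectorBasis '' ↑s)) :
    c * ‖v‖ ^ 2 ≤ ⟪v, (WithLp.toLp 2 (M *ᵥ v) : EuclideanSpace ℝ (Fin N))⟫ := by
  rw [qf_expand hM v, norm_sq_eq_sum_inner hM v, Finset.mul_sum]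
  refine Finset.sum_le_sum fun i _ => ?_
  by_cases hi : i ∈ s
  · exact mul_le_mul_of_nonneg_right (hs i hi) (sq_nonneg _)
  · rw [inner_eq_zero_of_span hM s hi hv]; simp

lemma bessel_cols {N p d : ℕ} (C : Matrix (Fin N) (Fin p) ℝ)
    (w : Fin d → EuclideanSpace ℝ (Fin N)) (hw : Orthonormal ℝ w) :
    ∑ i, ∑ j, ((Cᵀ *ᵥ (w i : Fin N → ℝ)) j) ^ 2 ≤ ∑ k, ∑ j, (C k j) ^ 2 := by
  rw [Finset.sum_comm]
  rw [show ∑ k, ∑ j, (C k j)^2 = ∑ j, ∑ k, (C k j)^2 from Finset.sum_comm]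
  refine Finset.sum_le_sum fun j _ => ?_
  set cj : EuclideanSpace ℝ (Fin N) := WithLp.toLp 2 (fun k => C k j : Fin N → ℝ) with hcj
  have h1 : ∀ i, (Cᵀ *ᵥ (w i : Fin N → ℝ)) j = ⟪w i, cj⟫ := by
    intro i
    simp [Matrix.mulVec, dotProduct, PiLp.inner_apply, RCLike.inner_apply, hcj,
      Matrix.transpose_apply, mul_comm]
  have h2 := hw.sum_inner_products_le (s := Finset.univ) cj
  have h3 : ‖cj‖ ^ 2 = ∑ k, (C k j) ^ 2 := by
    rw [EuclideanSpace.norm_eq, Real.sq_sqrt (by positivity)]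
    exact Finset.sum_congr rfl fun k _ => by rw [Real.norm_eq_abs, sq_abs]
  calc ∑ i, ((Cᵀ *ᵥ (w i : Fin N → ℝ)) j) ^ 2
      = ∑ i, ‖⟪w i, cj⟫‖ ^ 2 := by
        refine Finset.sum_congr rfl fun i _ => ?_
        rw [h1 i, Real.norm_eq_abs, sq_abs]
    _ ≤ ‖cj‖ ^ 2 := h2
    _ = ∑ k, (C k j) ^ 2 := h3

lemma qf_gram {N p : ℕ} (C : Matrix (Fin N) (Fin p) ℝ) (v : EuclideanSpace ℝ (Fin N)) :
    ⟪v, (WithLp.toLp 2 ((C * Cᵀ) *ᵥ (v : Fin N → ℝ)) : EuclideanSpace ℝ (Fin N))⟫ =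
      ∑ j, ((Cᵀ *ᵥ (v : Fin N → ℝ)) j) ^ 2 := by
  set u : Fin p → ℝ := Cᵀ *ᵥ (v : Fin N → ℝ) with hu
  have h : (C * Cᵀ) *ᵥ (v : Fin N → ℝ) = C *ᵥ u := by rw [hu, Matrix.mulVec_mulVec]
  rw [h]
  have h2 : ⟪v, (WithLp.toLp 2 (C *ᵥ u) : EuclideanSpace ℝ (Fin N))⟫ = ∑ k, v k * ∑ j, C k j * u j := by
    simp only [PiLp.inner_apply, RCLike.inner_apply, conj_trivial]
    exact Finset.sum_congr rfl fun k _ => by rw [show (C *ᵥ u) k = ∑ j, C k j * u j from rfl]; ring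
  rw [h2]
  simp only [Finset.mul_sum]
  rw [Finset.sum_comm]
  refine Finset.sum_congr rfl fun j _ => ?_
  have h3 : u j = ∑ k, v k * C k j := by
    rw [hu, show (Cᵀ *ᵥ (v : Fin N → ℝ)) j = ∑ k, Cᵀ j k * v k from rfl]
    exact Finset.sum_congr rfl fun k _ => by rw [Matrix.transpose_apply]; ring
  calc ∑ k, v k * (C k j * u j) = (∑ k, v k * C k j) * u j := by
        rw [Finset.sum_mul]; exact Finset.sum_congr rfl fun k _ => by ring
    _ = u j ^ 2 := by rw [← h3, sq]

lemma trace_gram {N p : ℕ} (C : Matrix (Fin N) (Fin p) ℝ) :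
    Matrix.trace (C * Cᵀ) = ∑ k, ∑ j, (C k j) ^ 2 := by
  simp [Matrix.trace, Matrix.diag, Matrix.mul_apply, sq]

lemma trace_gram_nonneg {N p : ℕ} (C : Matrix (Fin N) (Fin p) ℝ) :
    0 ≤ Matrix.trace (C * Cᵀ) := by
  rw [trace_gram]; positivity

lemma cs_sqrt {ι : Type*} [Fintype ι] (f g : ι → ℝ) (a b : ℝ)
    (hf : ∑ i, f i ^ 2 ≤ a) (hg : ∑ i, g i ^ 2 ≤ b) :
    ∑ i, f i * g i ≤ Real.sqrt a * Real.sqrt b := by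
  have h0 : ∑ i, f i * g i ≤ Real.sqrt ((∑ i, f i ^ 2) * (∑ i, g i ^ 2)) := by
    calc ∑ i, f i * g i ≤ |∑ i, f i * g i| := le_abs_self _
      _ = Real.sqrt ((∑ i, f i * g i) ^ 2) := (Real.sqrt_sq_eq_abs _).symm
      _ ≤ _ := Real.sqrt_le_sqrt (Finset.sum_mul_sq_le_sq_mul_sq _ _ _)
  calc ∑ i, f i * g i ≤ _ := h0
    _ ≤ Real.sqrt (a * b) := Real.sqrt_le_sqrt
        (mul_le_mul hf hg (Finset.sum_nonneg fun i _ => sq_nonneg _)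
          (le_trans (Finset.sum_nonneg fun i _ => sq_nonneg _) hf))
    _ = Real.sqrt a * Real.sqrt b := Real.sqrt_mul
        (le_trans (Finset.sum_nonneg fun i _ => sq_nonneg _) hf) _

lemma core_lemma {N p : ℕ} (A B : Matrix (Fin N) (Fin p) ℝ)
    (hA : (A * Aᵀ).IsHermitian) (hB : (B * Bᵀ).IsHermitian) (ε x : ℝ) (hε : 0 < ε)
    (hcount : ((Finset.univ.filter fun k => hB.eigenvalues k ≤ x).card : ℝ) + ε * N <
      ((Finset.univ.filter fun k => hA.eigenvalues k ≤ x - ε).card : ℝ)) :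
    (N : ℝ) * ε ^ 2 < Real.sqrt (Matrix.trace ((A - B) * (A - B)ᵀ)) *
      Real.sqrt (2 * Matrix.trace (A * Aᵀ + B * Bᵀ)) := by
  classical
  set sA : Finset (Fin N) := Finset.univ.filter fun k => hA.eigenvalues k ≤ x - ε with hsA
  set sB : Finset (Fin N) := Finset.univ.filter fun k => ¬ hB.eigenvalues k ≤ x with hsB
  set n : ℕ := (Finset.univ.filter fun k => hB.eigenvalues k ≤ x).card with hn
  set U := Submodule.span ℝ (⇑hA.eigenvectorBasis '' ↑sA) with hUdef
  set W := Submodule.span ℝ (⇑hB.eigenvectorBasis '' ↑sB) with hWdef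
  -- dimension of U and W
  have himg : ∀ {M : Matrix (Fin N) (Fin N) ℝ} (hM : M.IsHermitian) (s : Finset (Fin N)),
      finrank ℝ (Submodule.span ℝ (⇑hM.eigenvectorBasis '' ↑s)) = s.card := by
    intro M hM s
    have hli : LinearIndependent ℝ (fun i : {y // y ∈ s} => hM.eigenvectorBasis ↑i) :=
      (hM.eigenvectorBasis.orthonormal.comp _ Subtype.val_injective).linearIndependent
    have hrange : Set.range (fun i : {y // y ∈ s} => hM.eigenvectorBasis ↑i)
        = ⇑hM.eigenvectorBasis '' ↑s := by
      rw [show (fun i : {y // y ∈ s} => hM.eigenvectorBasis ↑i)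
          = ⇑hM.eigenvectorBasis ∘ Subtype.val from rfl, Set.range_comp]
      have : Set.range (Subtype.val : {y // y ∈ s} → Fin N) = ↑s := by ext y; simp
      rw [this]
    rw [← hrange, finrank_span_eq_card hli, Fintype.card_coe]
  have hU : finrank ℝ U = sA.card := himg hA sA
  have hW : finrank ℝ W = sB.card := himg hB sB
  have hNW : n + sB.card = N := by
    rw [hn, hsB]
    rw [Finset.card_filter_add_card_filter_not]
    simp
  set d : ℕ := finrank ℝ ↥(U ⊓ W) with hd_def
  have hUW : finrank ℝ U + finrank ℝ W ≤ N + d := by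
    have h1 := Submodule.finrank_sup_add_finrank_inf_eq U W
    have h2 : finrank ℝ ↥(U ⊔ W) ≤ N := by
      have h3 := Submodule.finrank_le (U ⊔ W)
      rwa [finrank_euclideanSpace_fin] at h3
    omega
  have hd : ε * N < (d : ℝ) := by
    have hc1 : (sA.card : ℝ) + sB.card ≤ N + d := by
      rw [← hU, ← hW]; exact_mod_cast hUW
    have hc2 : (n : ℝ) + sB.card = N := by exact_mod_cast hNW
    linarith
  -- orthonormal family in the intersection
  set obb := stdOrthonormalBasis ℝ ↥(U ⊓ W) with hobb
  set w : Fin d → EuclideanSpace ℝ (Fin N) := fun i => ((obb i : ↥(U ⊓ W)) : EuclideanSpace ℝ (Fin N)) with hwdef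
  have hw : Orthonormal ℝ w :=
    obb.orthonormal.comp_linearIsometry (U ⊓ W).subtypeₗᵢ
  have hwnorm : ∀ i, ‖w i‖ ^ 2 = 1 := fun i => by rw [hw.1 i]; norm_num
  have hmemU : ∀ i, w i ∈ U := fun i => (Submodule.mem_inf.1 (obb i).2).1
  have hmemW : ∀ i, w i ∈ W := fun i => (Submodule.mem_inf.1 (obb i).2).2
  -- quadratic form gap
  have key : ∀ i, ε ≤ ⟪w i, (WithLp.toLp 2 ((B * Bᵀ) *ᵥ (w i : Fin N → ℝ)) : EuclideanSpace ℝ (Fin N))⟫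
      - ⟪w i, (WithLp.toLp 2 ((A * Aᵀ) *ᵥ (w i : Fin N → ℝ)) : EuclideanSpace ℝ (Fin N))⟫ := by
    intro i
    have h1 := qf_le hA sA (x - ε) (fun j hj => (Finset.mem_filter.1 hj).2) (hmemU i)
    have h2 := qf_ge hB sB x
      (fun j hj => le_of_lt (not_le.1 (Finset.mem_filter.1 hj).2)) (hmemW i)
    rw [hwnorm i, mul_one] at h1 h2
    linarith
  have hsum : (N : ℝ) * ε ^ 2 < ∑ i,
      (⟪w i, (WithLp.toLp 2 ((B * Bᵀ) *ᵥ (w i : Fin N → ℝ)) : EuclideanSpace ℝ (Fin N))⟫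
      - ⟪w i, (WithLp.toLp 2 ((A * Aᵀ) *ᵥ (w i : Fin N → ℝ)) : EuclideanSpace ℝ (Fin N))⟫) := by
    have h1 : ((d : ℝ)) * ε ≤ ∑ i,
        (⟪w i, (WithLp.toLp 2 ((B * Bᵀ) *ᵥ (w i : Fin N → ℝ)) : EuclideanSpace ℝ (Fin N))⟫
        - ⟪w i, (WithLp.toLp 2 ((A * Aᵀ) *ᵥ (w i : Fin N → ℝ)) : EuclideanSpace ℝ (Fin N))⟫) := by
      calc (d : ℝ) * ε = ∑ _i : Fin d, ε := by
            rw [Finset.sum_const, Finset.card_univ, Fintype.card_fin, nsmul_eq_mul]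
        _ ≤ _ := Finset.sum_le_sum fun i _ => key i
    have h2 : (N : ℝ) * ε ^ 2 < (d : ℝ) * ε := by
      have := mul_lt_mul_of_pos_right hd hε
      calc (N : ℝ) * ε ^ 2 = ε * N * ε := by ring
        _ < (d : ℝ) * ε := this
    linarith
  -- upper bound via Cauchy-Schwarz and Bessel
  have hup : ∑ i, (⟪w i, (WithLp.toLp 2 ((B * Bᵀ) *ᵥ (w i : Fin N → ℝ)) : EuclideanSpace ℝ (Fin N))⟫
      - ⟪w i, (WithLp.toLp 2 ((A * Aᵀ) *ᵥ (w i : Fin N → ℝ)) : EuclideanSpace ℝ (Fin N))⟫)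
      ≤ Real.sqrt (Matrix.trace ((A - B) * (A - B)ᵀ)) *
        Real.sqrt (2 * Matrix.trace (A * Aᵀ + B * Bᵀ)) := by
    have e1 : ∀ i, ⟪w i, (WithLp.toLp 2 ((B * Bᵀ) *ᵥ (w i : Fin N → ℝ)) : EuclideanSpace ℝ (Fin N))⟫
        - ⟪w i, (WithLp.toLp 2 ((A * Aᵀ) *ᵥ (w i : Fin N → ℝ)) : EuclideanSpace ℝ (Fin N))⟫
        = ∑ j, (((B - A)ᵀ *ᵥ (w i : Fin N → ℝ)) j) * (((A + B)ᵀ *ᵥ (w i : Fin N → ℝ)) j) := by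
      intro i
      rw [qf_gram B (w i), qf_gram A (w i), ← Finset.sum_sub_distrib]
      refine Finset.sum_congr rfl fun j _ => ?_
      have hb' : ((B - A)ᵀ *ᵥ (w i : Fin N → ℝ)) j
          = (Bᵀ *ᵥ (w i : Fin N → ℝ)) j - (Aᵀ *ᵥ (w i : Fin N → ℝ)) j := by
        rw [Matrix.transpose_sub, Matrix.sub_mulVec]; rfl
      have ha' : ((A + B)ᵀ *ᵥ (w i : Fin N → ℝ)) j
          = (Aᵀ *ᵥ (w i : Fin N → ℝ)) j + (Bᵀ *ᵥ (w i : Fin N → ℝ)) j := by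
        rw [Matrix.transpose_add, Matrix.add_mulVec]; rfl
      rw [hb', ha']; ring
    rw [Finset.sum_congr rfl fun i _ => e1 i]
    have flat : ∑ q : Fin d × Fin p, (((B - A)ᵀ *ᵥ (w q.1 : Fin N → ℝ)) q.2) * (((A + B)ᵀ *ᵥ (w q.1 : Fin N → ℝ)) q.2)
        = ∑ i, ∑ j, (((B - A)ᵀ *ᵥ (w i : Fin N → ℝ)) j) * (((A + B)ᵀ *ᵥ (w i : Fin N → ℝ)) j) :=
      Fintype.sum_prod_type _
    rw [← flat]
    refine cs_sqrt _ _ _ _ ?_ ?_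
    · -- bound for B - A
      have h1 : ∑ q : Fin d × Fin p, (((B - A)ᵀ *ᵥ (w q.1 : Fin N → ℝ)) q.2) ^ 2
          = ∑ i, ∑ j, (((B - A)ᵀ *ᵥ (w i : Fin N → ℝ)) j) ^ 2 := Fintype.sum_prod_type _
      rw [h1]
      calc _ ≤ ∑ k, ∑ j, ((B - A) k j) ^ 2 := bessel_cols (B - A) w hw
        _ = Matrix.trace ((A - B) * (A - B)ᵀ) := by
            rw [trace_gram]
            refine Finset.sum_congr rfl fun k _ => Finset.sum_congr rfl fun j _ => ?_
            have : (B - A) k j = -((A - B) k j) := by simp [Matrix.sub_apply]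
            rw [this, neg_sq]
    · -- bound for A + B
      have h1 : ∑ q : Fin d × Fin p, (((A + B)ᵀ *ᵥ (w q.1 : Fin N → ℝ)) q.2) ^ 2
          = ∑ i, ∑ j, (((A + B)ᵀ *ᵥ (w i : Fin N → ℝ)) j) ^ 2 := Fintype.sum_prod_type _
      rw [h1]
      calc _ ≤ ∑ k, ∑ j, ((A + B) k j) ^ 2 := bessel_cols (A + B) w hw
        _ ≤ 2 * Matrix.trace (A * Aᵀ + B * Bᵀ) := by
            rw [Matrix.trace_add, trace_gram, trace_gram]
            have hptw : ∀ k j, (A + B) k j ^ 2 ≤ 2 * A k j ^ 2 + 2 * B k j ^ 2 := by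
              intro k j
              have he : (A + B) k j = A k j + B k j := rfl
              rw [he]; nlinarith [sq_nonneg (A k j - B k j)]
            have e2 : ∀ (f : Fin N → Fin p → ℝ), ∑ k, ∑ j, 2 * f k j = 2 * ∑ k, ∑ j, f k j :=
              fun f => by
                rw [Finset.mul_sum]
                exact Finset.sum_congr rfl fun k _ => by rw [Finset.mul_sum]
            calc ∑ k, ∑ j, (A + B) k j ^ 2
                ≤ ∑ k, ∑ j, (2 * A k j ^ 2 + 2 * B k j ^ 2) :=
                  Finset.sum_le_sum fun k _ => Finset.sum_le_sum fun j _ => hptw k j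
              _ = (∑ k, ∑ j, 2 * A k j ^ 2) + ∑ k, ∑ j, 2 * B k j ^ 2 := by
                  rw [← Finset.sum_add_distrib]
                  exact Finset.sum_congr rfl fun k _ => by rw [← Finset.sum_add_distrib]
              _ = 2 * (∑ k, ∑ j, A k j ^ 2 + ∑ k, ∑ j, B k j ^ 2) := by
                  rw [e2 (fun k j => A k j ^ 2), e2 (fun k j => B k j ^ 2)]; ring
  linarith

/-- Empirical spectral distribution function of a Hermitian real matrix. -/
noncomputable def ESD {N : ℕ} {M : Matrix (Fin N) (Fin N) ℝ}
    (hM : M.IsHermitian) : ℝ → ℝ :=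
  fun x => (1 / (N : ℝ)) * (Finset.univ.filter (fun k => hM.eigenvalues k ≤ x)).card

/-- The Lévy distance between two distribution functions. -/
noncomputable def levyDist (F G : ℝ → ℝ) : ℝ :=
  sInf {ε : ℝ | 0 < ε ∧ ∀ x, F (x - ε) - ε ≤ G x ∧ G x ≤ F (x + ε) + ε}

/-- Corollary A.42 in Bai–Silverstein: for `N × p` real matrices `A`, `B`,
`d²(F_{AAᵀ}, F_{BBᵀ}) ≤ (√2/N) [Tr(AAᵀ + BBᵀ) · Tr((A-B)(A-B)ᵀ)]^{1/2}`. -/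
theorem levy_dist_gram_bound {N p : ℕ} (hN : 0 < N)
    (A B : Matrix (Fin N) (Fin p) ℝ)
    (hA : (A * Aᵀ).IsHermitian) (hB : (B * Bᵀ).IsHermitian) :
    (levyDist (ESD hA) (ESD hB)) ^ 2 ≤
      (Real.sqrt 2 / N) *
        Real.sqrt (Matrix.trace (A * Aᵀ + B * Bᵀ) *
          Matrix.trace ((A - B) * (A - B)ᵀ)) := by
  have hNpos : (0 : ℝ) < N := by exact_mod_cast hN
  have hNne : (N : ℝ) ≠ 0 := ne_of_gt hNpos
  set T := Matrix.trace (A * Aᵀ + B * Bᵀ) with hTdef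
  set S := Matrix.trace ((A - B) * (A - B)ᵀ) with hSdef
  have hS : 0 ≤ S := trace_gram_nonneg (A - B)
  have hT : 0 ≤ T := by
    rw [hTdef, Matrix.trace_add]
    exact add_nonneg (trace_gram_nonneg A) (trace_gram_nonneg B)
  set R : ℝ := Real.sqrt 2 / N * Real.sqrt (T * S) with hRdef
  have hR0 : 0 ≤ R := by positivity
  have hkey : Real.sqrt S * Real.sqrt (2 * T) = N * R := by
    rw [hRdef, Real.sqrt_mul (by norm_num : (0:ℝ) ≤ 2) T, Real.sqrt_mul hT S]
    field_simp
  have hmem : ∀ ε : ℝ, 0 < ε → R ≤ ε ^ 2 →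
      ε ∈ {ε : ℝ | 0 < ε ∧ ∀ x, ESD hA (x - ε) - ε ≤ ESD hB x ∧
        ESD hB x ≤ ESD hA (x + ε) + ε} := by
    intro ε hε hRε
    refine ⟨hε, fun x => ⟨?_, ?_⟩⟩
    · by_contra hcon
      push_neg at hcon
      simp only [ESD] at hcon
      have hc : ((Finset.univ.filter fun k => hB.eigenvalues k ≤ x).card : ℝ) + ε * N <
          ((Finset.univ.filter fun k => hA.eigenvalues k ≤ x - ε).card : ℝ) := by
        have h4 := mul_lt_mul_of_pos_left hcon hNpos
        rw [mul_sub, ← mul_assoc, mul_one_div_cancel hNne, ← mul_assoc,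
          mul_one_div_cancel hNne, one_mul, one_mul] at h4
        linarith
      have h5 := core_lemma A B hA hB ε x hε hc
      rw [← hSdef, ← hTdef, hkey] at h5
      have h6 : (N : ℝ) * R ≤ N * ε ^ 2 := by
        exact mul_le_mul_of_nonneg_left hRε (le_of_lt hNpos)
      linarith
    · by_contra hcon
      push_neg at hcon
      simp only [ESD] at hcon
      have hc : ((Finset.univ.filter fun k => hA.eigenvalues k ≤ x + ε).card : ℝ) + ε * N <
          ((Finset.univ.filter fun k => hB.eigenvalues k ≤ x + ε - ε).card : ℝ) := by
        have hxx : x + ε - ε = x := by ring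
        rw [hxx]
        have h4 := mul_lt_mul_of_pos_left hcon hNpos
        rw [mul_add, ← mul_assoc, mul_one_div_cancel hNne, ← mul_assoc,
          mul_one_div_cancel hNne, one_mul, one_mul] at h4
        linarith
      have h5 := core_lemma B A hB hA ε (x + ε) hε hc
      have e1 : Matrix.trace ((B - A) * (B - A)ᵀ) = S := by
        rw [hSdef, show B - A = -(A - B) from (neg_sub A B).symm, Matrix.transpose_neg,
          Matrix.neg_mul, Matrix.mul_neg, neg_neg]
      have e2 : Matrix.trace (B * Bᵀ + A * Aᵀ) = T := by rw [hTdef, add_comm]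
      rw [e1, e2, hkey] at h5
      have h6 : (N : ℝ) * R ≤ N * ε ^ 2 :=
        mul_le_mul_of_nonneg_left hRε (le_of_lt hNpos)
      linarith
  have hbdd : BddBelow {ε : ℝ | 0 < ε ∧ ∀ x, ESD hA (x - ε) - ε ≤ ESD hB x ∧
      ESD hB x ≤ ESD hA (x + ε) + ε} := ⟨0, fun y hy => le_of_lt hy.1⟩
  have hub : levyDist (ESD hA) (ESD hB) ≤ Real.sqrt R := by
    refine le_of_forall_pos_le_add fun δ hδ => ?_
    refine csInf_le_of_le hbdd (hmem (Real.sqrt R + δ) (by positivity) ?_) le_rfl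
    nlinarith [Real.sq_sqrt hR0, Real.sqrt_nonneg R]
  have hlb : 0 ≤ levyDist (ESD hA) (ESD hB) :=
    Real.sInf_nonneg fun y hy => le_of_lt hy.1
  calc levyDist (ESD hA) (ESD hB) ^ 2 ≤ Real.sqrt R ^ 2 :=
        pow_le_pow_left₀ hlb hub 2
    _ = R := Real.sq_sqrt hR0
end

section
/- Let H be a probability distribution on [0,∞), c ∈ (0,∞), and z ∈ ℂ⁺. Suppose S : ℂ⁺ → ℂ⁺ is a Stieltjes transform satisfying S = ∫ 1/(x(1 - c - czS) - z) dH(x), and set S̲ = -(1-c)/z + cS. Then S̲ satisfies z = -1/S̲ + c ∫ x/(1 + x S̲) dH(x). -/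
open MeasureTheory

/-- Algebraic reformulation of the Marčenko–Pastur equation: if the Stieltjes
transform `S` (with values in `ℂ⁺`) satisfies
`S = ∫ 1/(x(1 - c - czS) - z) dH(x)` and `S̲ = -(1-c)/z + cS` (which is again a
Stieltjes transform, so `Im S̲ > 0`), then `z = -1/S̲ + c ∫ x/(1 + x S̲) dH(x)`. -/
theorem mp_equation_reformulation
    (H : Measure ℝ) [IsProbabilityMeasure H] (hH : ∀ᵐ x ∂H, 0 ≤ x)
    (c : ℝ) (hc : 0 < c)
    (z S Sb : ℂ) (hz : 0 < z.im) (hS : 0 < S.im)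
    (hSb : Sb = -(1 - (c : ℂ)) / z + c * S) (hSbim : 0 < Sb.im)
    (heq : S = ∫ x : ℝ, 1 / ((x : ℂ) * (1 - c - c * z * S) - z) ∂H) :
    z = -1 / Sb + c * ∫ x : ℝ, (x : ℂ) / (1 + (x : ℂ) * Sb) ∂H := by
  have hz0 : z ≠ 0 := fun h => by simp [h] at hz
  have hSb0 : Sb ≠ 0 := fun h => by simp [h] at hSbim
  -- the denominator 1 + x Sb never vanishes for real x
  have hden : ∀ x : ℝ, 1 + (x : ℂ) * Sb ≠ 0 := by
    intro x h
    rcases eq_or_ne x 0 with hx | hx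
    · simp [hx] at h
    · have him : (1 + (x : ℂ) * Sb).im = 0 := by rw [h]; simp
      simp [Complex.add_im, Complex.mul_im] at him
      rcases him with h1 | h1
      · exact hx h1
      · exact absurd h1 hSbim.ne'
  have hcont : Continuous (fun x : ℝ => (x : ℂ) / (1 + (x : ℂ) * Sb)) := by
    apply Continuous.div
    · exact Complex.continuous_ofReal
    · exact continuous_const.add (Complex.continuous_ofReal.mul continuous_const)
    · exact hden
  -- integrability of x / (1 + x Sb)
  have hint : Integrable (fun x : ℝ => (x : ℂ) / (1 + (x : ℂ) * Sb)) H := by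
    apply (integrable_const ((Sb.im)⁻¹)).mono' hcont.aestronglyMeasurable
    filter_upwards [hH] with x hx
    rcases eq_or_lt_of_le hx with hx0 | hx0
    · simp [← hx0]
      positivity
    · have hb : x * Sb.im ≤ ‖1 + (x : ℂ) * Sb‖ := by
        have h1 : x * Sb.im = (1 + (x : ℂ) * Sb).im := by simp
        rw [h1]
        exact (le_abs_self _).trans (Complex.abs_im_le_norm _)
      have hpos : 0 < x * Sb.im := mul_pos hx0 hSbim
      rw [norm_div, Complex.norm_real, Real.norm_eq_abs, abs_of_pos hx0,
        div_le_iff₀ (lt_of_lt_of_le hpos hb)]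
      calc x = (Sb.im)⁻¹ * (x * Sb.im) := by field_simp
        _ ≤ (Sb.im)⁻¹ * ‖1 + (x : ℂ) * Sb‖ := by
            apply mul_le_mul_of_nonneg_left hb (by positivity)
  -- key algebraic identity
  have key : 1 - (c : ℂ) - c * z * S = -z * Sb := by
    rw [hSb]; field_simp; ring
  have heq2 : S = (-1 / z) * ∫ x : ℝ, 1 / (1 + (x : ℂ) * Sb) ∂H := by
    rw [← integral_const_mul, heq]
    apply integral_congr_ae
    filter_upwards with x
    rw [key, show (x : ℂ) * (-z * Sb) - z = -(z * (1 + (x : ℂ) * Sb)) by ring]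
    rw [div_neg, div_mul_div_comm]
    norm_num
    rw [neg_div, one_div, mul_inv, mul_comm]
  have hI1 : (∫ x : ℝ, 1 / (1 + (x : ℂ) * Sb) ∂H)
      = 1 - Sb * ∫ x : ℝ, (x : ℂ) / (1 + (x : ℂ) * Sb) ∂H := by
    have h2 : (∫ x : ℝ, 1 / (1 + (x : ℂ) * Sb) ∂H)
        = ∫ x : ℝ, ((1 : ℂ) - Sb * ((x : ℂ) / (1 + (x : ℂ) * Sb))) ∂H := by
      apply integral_congr_ae
      filter_upwards with x
      have h1 := hden x
      field_simp
      ring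
    rw [h2, integral_sub (integrable_const 1) (hint.const_mul Sb), integral_const,
      integral_const_mul]
    simp
  set t := ∫ x : ℝ, (x : ℂ) / (1 + (x : ℂ) * Sb) ∂H with ht
  have hS3 : z * S = -(1 - Sb * t) := by
    rw [heq2, hI1]; field_simp
  have hc2 : (c : ℂ) * (z * S) = z * Sb + (1 - c) := by
    rw [hSb]; field_simp; ring
  have hfin : z * Sb = -1 + c * Sb * t := by
    rw [hS3] at hc2
    linear_combination -hc2
  field_simp
  linear_combination hfin
end
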